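/- Fix α ∈ (0,1) and an integer d ≥ 1. For each sufficiently large v > 0, the map u ↦ Ψ(u − d/v)/Ψ(v − d/v) is continuous and strictly decreasing on [v, ∞), taking value 1 at u = v and tending to 0, hence there is a unique u_TG(α, v) ≥ v with Ψ(u_TG(α,v) − d/v)/Ψ(v − d/v) = α. Moreover, there exists v₀ < ∞, depending only on α and d, such that for all v ≥ v₀, u_TG(α, v) ≤ v + 2·log(1/α)/v. -/

import Mathlib

open MeasureTheory

/-- The standard normal density `φ(z) = (2π)^{-1/2} exp(−z²/2)`. -/
noncomputable def phi (x : ℝ) : ℝ := (Real.sqrt (2 * Real.pi))⁻¹ * Real.exp (-x ^ 2 / 2)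

/-- The standard Gaussian survival function `Ψ(x) = ∫_x^∞ φ(z) dz`. -/
noncomputable def Psi (x : ℝ) : ℝ := ∫ z in Set.Ioi x, phi z

lemma phi_pos (x : ℝ) : 0 < phi x := by
  apply mul_pos (inv_pos.2 (Real.sqrt_pos.2 (by positivity))) (Real.exp_pos _)

lemma phi_cont : Continuous phi := by
  unfold phi; fun_prop

lemma integrable_phi : Integrable phi := by
  have h : Integrable (fun x : ℝ => Real.exp (-(1/2 : ℝ) * x ^ 2)) :=
    integrable_exp_neg_mul_sq (by norm_num)
  have : phi = fun x : ℝ => (Real.sqrt (2 * Real.pi))⁻¹ * Real.exp (-(1/2 : ℝ) * x ^ 2) := by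
    funext x; unfold phi; ring_nf
  rw [this]
  exact h.const_mul _

lemma Psi_eq (x : ℝ) : Psi x = (∫ z, phi z) - ∫ z in Set.Iic x, phi z := by
  have := intervalIntegral.integral_Iic_add_Ioi (b := x) integrable_phi.integrableOn
    integrable_phi.integrableOn
  unfold Psi; linarith

lemma Psi_eq' (x : ℝ) : Psi x = Psi 0 - ∫ z in (0:ℝ)..x, phi z := by
  rw [Psi_eq x, Psi_eq 0, ← intervalIntegral.integral_Iic_sub_Iic integrable_phi.integrableOn
    integrable_phi.integrableOn]
  ring

lemma Psi_continuous : Continuous Psi := by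
  have h2 : Continuous (fun x : ℝ => ∫ z in (0:ℝ)..x, phi z) :=
    integrable_phi.continuous_primitive 0
  have : Psi = fun x => Psi 0 - ∫ z in (0:ℝ)..x, phi z := funext Psi_eq'
  rw [this]
  exact continuous_const.sub h2

lemma Psi_strictAnti : StrictAnti Psi := by
  intro x y hxy
  rw [Psi_eq, Psi_eq]
  have : ∫ z in Set.Iic x, phi z < ∫ z in Set.Iic y, phi z := by
    have := intervalIntegral.integral_Iic_sub_Iic (a := x) (b := y)
      integrable_phi.integrableOn integrable_phi.integrableOn
    have hpos : 0 < ∫ z in x..y, phi z :=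
      intervalIntegral.intervalIntegral_pos_of_pos
        integrable_phi.intervalIntegrable (fun z => phi_pos z) hxy
    linarith
  linarith

lemma Psi_pos (x : ℝ) : 0 < Psi x := by
  have h := intervalIntegral.intervalIntegral_pos_of_pos (a := x) (b := x + 1)
    integrable_phi.intervalIntegrable (fun z => phi_pos z) (by linarith)
  rw [← intervalIntegral.integral_Iic_sub_Iic integrable_phi.integrableOn
    integrable_phi.integrableOn] at h
  have e1 := Psi_eq x
  have e2 := Psi_eq (x + 1)
  have hnn : 0 ≤ Psi (x + 1) := by
    unfold Psi
    exact setIntegral_nonneg measurableSet_Ioi (fun z _ => (phi_pos z).le)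
  linarith

lemma Psi_shift (a t : ℝ) : Psi (a + t) = ∫ z in Set.Ioi a, phi (z + t) := by
  have h := (measurePreserving_add_right (volume : Measure ℝ) t).setIntegral_preimage_emb
    (measurableEmbedding_addRight t) phi (Set.Ioi (a + t))
  have hs : (fun x : ℝ => x + t) ⁻¹' Set.Ioi (a + t) = Set.Ioi a := by
    ext z; simp [Set.mem_Ioi]
  rw [hs] at h
  unfold Psi
  rw [← h]

lemma Psi_le (a t : ℝ) (ha : 0 ≤ a) (ht : 0 ≤ t) :
    Psi (a + t) ≤ Real.exp (-(a * t)) * Psi a := by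
  rw [Psi_shift]
  have : Real.exp (-(a * t)) * Psi a = ∫ z in Set.Ioi a, Real.exp (-(a * t)) * phi z := by
    unfold Psi; rw [integral_const_mul]
  rw [this]
  apply setIntegral_mono_on
  · exact (integrable_phi.comp_add_right t).integrableOn
  · exact (integrable_phi.const_mul _).integrableOn
  · exact measurableSet_Ioi
  · intro z hz
    have hz' : a < z := hz
    unfold phi
    rw [mul_comm (Real.exp (-(a*t))), mul_assoc, ← Real.exp_add]
    apply mul_le_mul_of_nonneg_left _ (by positivity)
    apply Real.exp_le_exp.2
    nlinarith [sq_nonneg t]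

lemma Psi_tendsto : Filter.Tendsto Psi Filter.atTop (nhds 0) := by
  have h1 : Filter.Tendsto (fun x : ℝ => 1 + -x) Filter.atTop Filter.atBot :=
    Filter.tendsto_atBot_add_const_left _ 1 Filter.tendsto_neg_atTop_atBot
  have hb : Filter.Tendsto (fun x : ℝ => Real.exp (1 + -x) * Psi 1)
      Filter.atTop (nhds 0) := by
    have := (Real.tendsto_exp_atBot.comp h1).mul_const (Psi 1)
    simpa using this
  refine squeeze_zero' ?_ ?_ hb
  · exact Filter.Eventually.of_forall fun x => (Psi_pos x).le
  · filter_upwards [Filter.eventually_ge_atTop (1:ℝ)] with x hx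
    have := Psi_le 1 (x - 1) zero_le_one (by linarith)
    have e : (1:ℝ) + (x - 1) = x := by ring
    have e2 : -(1 * (x - 1)) = 1 + -x := by ring
    rw [e, e2] at this
    exact this

/-- for all sufficiently large `v > 0` the map
`u ↦ Ψ(u − d/v)/Ψ(v − d/v)` is continuous and strictly decreasing on `[v, ∞)`, equals `1`
at `u = v`, and tends to `0`; hence there is a unique `u_TG(α,v) ≥ v` at which it equals
`α`; moreover `u_TG(α,v) ≤ v + 2 log(1/α)/v`. -/
theorem stmt19 (d : ℕ) (hd : 1 ≤ d) (α : ℝ) (hα0 : 0 < α) (hα1 : α < 1) :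
    ∃ v₀ : ℝ, 0 < v₀ ∧ ∀ v : ℝ, v₀ ≤ v →
      ContinuousOn (fun u : ℝ => Psi (u - d / v) / Psi (v - d / v)) (Set.Ici v) ∧
      StrictAntiOn (fun u : ℝ => Psi (u - d / v) / Psi (v - d / v)) (Set.Ici v) ∧
      Psi (v - d / v) / Psi (v - d / v) = 1 ∧
      Filter.Tendsto (fun u : ℝ => Psi (u - d / v) / Psi (v - d / v)) Filter.atTop (nhds 0) ∧
      (∃! u : ℝ, v ≤ u ∧ Psi (u - d / v) / Psi (v - d / v) = α) ∧
      (∀ u : ℝ, v ≤ u → Psi (u - d / v) / Psi (v - d / v) = α →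
        u ≤ v + 2 * Real.log (1 / α) / v) := by
  refine ⟨2 * d, by positivity, fun v hv => ?_⟩
  have hd1 : (1:ℝ) ≤ d := by exact_mod_cast hd
  have hv0 : 0 < v := lt_of_lt_of_le (by positivity) hv
  set c : ℝ := (d : ℝ) / v with hc_def
  have hc2 : c ≤ v / 2 := by
    rw [hc_def, div_le_div_iff₀ hv0 (by norm_num)]
    nlinarith
  have ha : 0 < v - c := by linarith
  have ha2 : v / 2 ≤ v - c := by linarith
  have hD : 0 < Psi (v - c) := Psi_pos _
  have cont : ContinuousOn (fun u : ℝ => Psi (u - c) / Psi (v - c)) (Set.Ici v) :=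
    ((Psi_continuous.comp (continuous_id.sub continuous_const)).div_const _).continuousOn
  have anti : StrictAntiOn (fun u : ℝ => Psi (u - c) / Psi (v - c)) (Set.Ici v) := by
    intro x _ y _ hxy
    exact div_lt_div_of_pos_right (Psi_strictAnti (sub_lt_sub_right hxy c)) hD
  have hone : Psi (v - c) / Psi (v - c) = 1 := div_self hD.ne'
  have htend : Filter.Tendsto (fun u : ℝ => Psi (u - c) / Psi (v - c))
      Filter.atTop (nhds 0) := by
    have h1 : Filter.Tendsto (fun u : ℝ => u - c) Filter.atTop Filter.atTop :=
      Filter.tendsto_atTop_add_const_right _ (-c) Filter.tendsto_id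
    have := (Psi_tendsto.comp h1).div_const (Psi (v - c))
    simpa using this
  have hbound : ∀ u : ℝ, v ≤ u → Psi (u - c) / Psi (v - c) = α →
      u ≤ v + 2 * Real.log (1 / α) / v := by
    intro u hu hfα
    set t := u - v with ht_def
    have ht : 0 ≤ t := by simp [ht_def]; linarith
    have hL : 0 < Real.log (1 / α) := Real.log_pos (by rw [one_div]; exact ((one_lt_inv₀ hα0).2 hα1 : 1 < α⁻¹))
    have hkey := Psi_le (v - c) t ha.le ht
    have heq : v - c + t = u - c := by ring
    rw [heq] at hkey
    have hPsiu : Psi (u - c) = α * Psi (v - c) := by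
      field_simp at hfα; linarith [hfα]
    rw [hPsiu] at hkey
    have hαle : α ≤ Real.exp (-((v - c) * t)) := by
      have := (mul_le_mul_iff_of_pos_right hD).1 hkey
      exact this
    have hlog : Real.log α ≤ -((v - c) * t) := by
      calc Real.log α ≤ Real.log (Real.exp (-((v - c) * t))) := Real.log_le_log hα0 hαle
        _ = -((v - c) * t) := Real.log_exp _
    have hL' : Real.log (1 / α) = -Real.log α := by rw [one_div, Real.log_inv]
    have hat : (v - c) * t ≤ Real.log (1 / α) := by rw [hL']; linarith
    have ht2 : t ≤ Real.log (1 / α) / (v - c) := (le_div_iff₀ ha).2 (by linarith [mul_comm t (v - c)])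
    have h3 : Real.log (1 / α) / (v - c) ≤ Real.log (1 / α) / (v / 2) :=
      div_le_div_of_nonneg_left hL.le (by linarith) ha2
    have h4 : Real.log (1 / α) / (v / 2) = 2 * Real.log (1 / α) / v := by
      field_simp
    have : t ≤ 2 * Real.log (1 / α) / v := by rw [← h4]; linarith
    linarith [this]
  refine ⟨cont, anti, hone, htend, ?_, hbound⟩
  · -- existence and uniqueness
    obtain ⟨M, hM1, hM2⟩ := ((htend.eventually (gt_mem_nhds hα0)).and
      (Filter.eventually_ge_atTop v)).exists
    have hMem : α ∈ Set.Icc (Psi (M - c) / Psi (v - c)) (Psi (v - c) / Psi (v - c)) := by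
      constructor
      · exact hM1.le
      · rw [hone]; exact hα1.le
    have := intermediate_value_Icc' hM2 (cont.mono Set.Icc_subset_Ici_self) hMem
    obtain ⟨u, hu, hfu⟩ := this
    refine ⟨u, ⟨hu.1, hfu⟩, ?_⟩
    rintro u' ⟨hu'1, hu'2⟩
    exact anti.injOn hu'1 hu.1 (by simp only at hfu ⊢; rw [hu'2, hfu])
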